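/- Let A, β, γ be positive real numbers, let M = (1/A)·[[−β, β], [β, −β − γ]], and let x : ℝ → ℝ² be differentiable with ẋ(t) = M·x(t) for all t ≥ 0. Then x(t) tends to 0 as t → ∞; in fact there exists c > 0 (depending only on A, β, γ) such that ‖x(t)‖ ≤ ‖x(0)‖·exp(−c·t) for all t ≥ 0. -/

import Mathlib

open Matrix Real Filter

/-- Solutions of the linearized two-tank system `ẋ = M x` with
`M = (1/A)·[[−β, β], [β, −β−γ]]`, `A, β, γ > 0`, converge to `0`; in fact they
decay exponentially: `‖x(t)‖ ≤ ‖x(0)‖·exp(−c t)` for some `c > 0`. -/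
theorem two_tank_linear_asymptotic_stability
    (A β γ : ℝ) (hA : 0 < A) (hβ : 0 < β) (hγ : 0 < γ)
    (M : Matrix (Fin 2) (Fin 2) ℝ)
    (hM : M = (1 / A) • !![-β, β; β, -β - γ])
    (x : ℝ → EuclideanSpace ℝ (Fin 2))
    (hx : ∀ t : ℝ, 0 ≤ t → HasDerivAt x (WithLp.toLp 2 (M.mulVec (x t))) t) :
    Tendsto x atTop (nhds 0) ∧
    ∃ c : ℝ, 0 < c ∧ ∀ t : ℝ, 0 ≤ t → ‖x t‖ ≤ ‖x 0‖ * Real.exp (-c * t) := by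
  set c : ℝ := min (β / 2) (γ / 3) / A with hc_def
  have hc : 0 < c := div_pos (lt_min (by linarith) (by linarith)) hA
  -- key quadratic form estimate
  have key : ∀ t : ℝ, (inner ℝ (x t) (WithLp.toLp 2 (M.mulVec (x t))) : ℝ) ≤ -c * ‖x t‖ ^ 2 := by
    intro t
    have hnorm : ‖x t‖ ^ 2 = (x t 0) ^ 2 + (x t 1) ^ 2 := by
      rw [← real_inner_self_eq_norm_sq]
      simp only [PiLp.inner_apply, Fin.sum_univ_two, RCLike.inner_apply, conj_trivial]
      ring
    have hinner : (inner ℝ (x t) (WithLp.toLp 2 (M.mulVec (x t))) : ℝ)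
        = (x t 0) * ((-β / A) * x t 0 + (β / A) * x t 1)
          + (x t 1) * ((β / A) * x t 0 + ((-β - γ) / A) * x t 1) := by
      simp [PiLp.inner_apply, Fin.sum_univ_two, hM, Matrix.mulVec, dotProduct,
        Matrix.smul_apply]
      ring
    rw [hinner, hnorm]
    set a := x t 0; set b := x t 1
    have hcA : c * A = min (β / 2) (γ / 3) := by
      rw [hc_def]; field_simp
    have hcA1 : c * A ≤ β / 2 := hcA ▸ min_le_left _ _
    have hcA2 : c * A ≤ γ / 3 := hcA ▸ min_le_right _ _
    have hre : a * (-β / A * a + β / A * b) + b * (β / A * a + (-β - γ) / A * b)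
        = (-(β * (a - b) ^ 2) - γ * b ^ 2) / A := by
      field_simp; ring
    rw [hre, div_le_iff₀ hA]
    nlinarith [mul_le_mul_of_nonneg_right hcA1 (sq_nonneg (a - b)), mul_le_mul_of_nonneg_right hcA2 (sq_nonneg b), mul_nonneg (mul_nonneg hc.le hA.le) (sq_nonneg (a - 2 * b))]
  -- exponential decay via monotonicity of g t = ‖x t‖² · exp(2ct)
  set g : ℝ → ℝ := fun s => ‖x s‖ ^ 2 * Real.exp (2 * c * s) with hg_def
  have hd : ∀ t : ℝ, 0 ≤ t → HasDerivAt g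
      ((2 * inner ℝ (x t) (WithLp.toLp 2 (M.mulVec (x t))) + 2 * c * ‖x t‖ ^ 2) * Real.exp (2 * c * t)) t := by
    intro t ht
    have h1 : HasDerivAt (fun s => ‖x s‖ ^ 2)
        (2 * inner ℝ (x t) (WithLp.toLp 2 (M.mulVec (x t))) : ℝ) t := by
      have := HasDerivAt.inner ℝ (hx t ht) (hx t ht)
      have heq : (fun s => (inner ℝ (x s) (x s) : ℝ)) = fun s => ‖x s‖ ^ 2 := by
        funext s; exact real_inner_self_eq_norm_sq (x s)
      rw [heq] at this
      refine this.congr_deriv ?_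
      rw [real_inner_comm]; ring
    have h2 : HasDerivAt (fun s => Real.exp (2 * c * s)) (Real.exp (2 * c * t) * (2 * c)) t := by
      simpa using ((hasDerivAt_id t).const_mul (2 * c)).exp
    have := h1.mul h2
    refine this.congr_deriv ?_
    ring
  have mono : AntitoneOn g (Set.Ici (0 : ℝ)) := by
    apply antitoneOn_of_deriv_nonpos (convex_Ici 0)
    · intro t ht
      exact (hd t ht).continuousAt.continuousWithinAt
    · intro t ht
      rw [interior_Ici] at ht
      exact ((hd t ht.le).differentiableAt).differentiableWithinAt
    · intro t ht
      rw [interior_Ici] at ht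
      rw [(hd t ht.le).deriv]
      have hk := key t
      have he := Real.exp_pos (2 * c * t)
      nlinarith
  have hbound : ∀ t : ℝ, 0 ≤ t → ‖x t‖ ≤ ‖x 0‖ * Real.exp (-c * t) := by
    intro t ht
    have hgt : g t ≤ g 0 := mono Set.self_mem_Ici ht ht
    have hg0 : g 0 = ‖x 0‖ ^ 2 := by simp [hg_def]
    have hsq : ‖x t‖ ^ 2 ≤ (‖x 0‖ * Real.exp (-c * t)) ^ 2 := by
      have hexp : (‖x 0‖ * Real.exp (-c * t)) ^ 2 = ‖x 0‖ ^ 2 / Real.exp (2 * c * t) := by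
        rw [mul_pow, ← Real.exp_nat_mul, eq_div_iff (Real.exp_pos _).ne', mul_assoc,
          ← Real.exp_add]
        simp [show -(2 * (c * t)) + 2 * c * t = 0 by ring]
      rw [hexp, le_div_iff₀ (Real.exp_pos _)]
      rw [hg0] at hgt
      exact hgt
    have h1 := Real.sqrt_le_sqrt hsq
    rwa [Real.sqrt_sq (norm_nonneg _),
      Real.sqrt_sq (by positivity)] at h1
  constructor
  · rw [tendsto_zero_iff_norm_tendsto_zero]
    have hb : Tendsto (fun t : ℝ => ‖x 0‖ * Real.exp (-c * t)) atTop (nhds 0) := by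
      have h1 : Tendsto (fun t : ℝ => Real.exp (-c * t)) atTop (nhds 0) := by
        have hct : Tendsto (fun t : ℝ => c * t) atTop atTop :=
          Tendsto.const_mul_atTop hc tendsto_id
        have heq : (fun t : ℝ => Real.exp (-c * t))
            = (fun u : ℝ => Real.exp (-u)) ∘ (fun t : ℝ => c * t) := by
          funext t; simp [Function.comp, neg_mul]
        rw [heq]
        exact Real.tendsto_exp_neg_atTop_nhds_zero.comp hct
      simpa using h1.const_mul (‖x 0‖)
    apply squeeze_zero' (Eventually.of_forall fun t => norm_nonneg _) _ hb
    filter_upwards [eventually_ge_atTop (0 : ℝ)] with t ht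
    exact hbound t ht
  · exact ⟨c, hc, hbound⟩
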